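/- Define R(x; ω) = [(x − ω² + τ^{−2})² + 4ω²τ^{−2}]^{−1/2} for x in the interval I = [4(g₀−g₁)², 4(g₀+g₁)²] and ω ∈ ℝ, with τ > 0 and g₀ > g₁ > 0. Then sup over ω ∈ ℝ and x ∈ I of g₀g₁ R(x;ω) equals (1/4) · g₀g₁τ/(g₀−g₁) · Ř(2(g₀−g₁)τ), where Ř(ξ) = 2ξ/(ξ²+1) if 0 ≤ ξ < 1 and Ř(ξ) = 1 if ξ ≥ 1. -/
import Mathlib


open Real

noncomputable def Rcheck (ξ : ℝ) : ℝ := if ξ < 1 then 2 * ξ / (ξ ^ 2 + 1) else 1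

private lemma rpow_sq_inv {c : ℝ} (hc : 0 < c) : (c ^ 2) ^ (-(1/2) : ℝ) = c⁻¹ := by
  rw [Real.rpow_neg (by positivity), ← Real.sqrt_eq_rpow, Real.sqrt_sq hc.le]

private lemma rpow_anti {m f : ℝ} (hm : 0 < m) (hmf : m ≤ f) :
    f ^ (-(1/2) : ℝ) ≤ m ^ (-(1/2) : ℝ) :=
  Real.rpow_le_rpow_of_nonpos hm hmf (by norm_num)

private lemma aux1 {a xm x u : ℝ} (ha : 0 < a) (hu : 0 ≤ u) (hx : xm ≤ x) (h : a ≤ xm) :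
    4 * a * xm ≤ (x - u + a) ^ 2 + 4 * u * a := by
  nlinarith [sq_nonneg (x - u - a)]

private lemma aux2 {a xm x u : ℝ} (ha : 0 < a) (hxm : 0 < xm) (hu : 0 ≤ u) (hx : xm ≤ x)
    (h : xm ≤ a) : (xm + a) ^ 2 ≤ (x - u + a) ^ 2 + 4 * u * a := by
  nlinarith [sq_nonneg (x - u - a), sq_nonneg (x - u - xm), mul_nonneg hu ha.le,
    mul_nonneg (sub_nonneg.mpr hx) ha.le, mul_nonneg (sub_nonneg.mpr h) hxm.le,
    mul_nonneg (mul_nonneg hu ha.le) (sub_nonneg.mpr hx)]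

theorem resonance_sup (g₀ g₁ τ : ℝ) (hg : g₁ < g₀) (hg₁ : 0 < g₁) (hτ : 0 < τ) :
    sSup {y : ℝ | ∃ ω : ℝ, ∃ x ∈ Set.Icc (4 * (g₀ - g₁) ^ 2) (4 * (g₀ + g₁) ^ 2),
        y = g₀ * g₁ * ((x - ω ^ 2 + τ⁻¹ ^ 2) ^ 2 + 4 * ω ^ 2 * τ⁻¹ ^ 2) ^ (-(1/2) : ℝ)}
      = (1/4) * (g₀ * g₁ * τ / (g₀ - g₁)) * Rcheck (2 * (g₀ - g₁) * τ) := by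
  have hgd : 0 < g₀ - g₁ := sub_pos.mpr hg
  have hg₀ : 0 < g₀ := hg₁.trans hg
  have ha0 : (0:ℝ) < τ⁻¹ ^ 2 := by positivity
  set a : ℝ := τ⁻¹ ^ 2 with hadef
  set xm : ℝ := 4 * (g₀ - g₁) ^ 2 with hxmdef
  have hxm0 : 0 < xm := by positivity
  have hτ' : τ ≠ 0 := ne_of_gt hτ
  apply IsGreatest.csSup_eq
  rcases lt_or_ge (2 * (g₀ - g₁) * τ) 1 with hc | hc
  · -- ξ < 1 : xm ≤ a, min is (xm + a)^2, attained at ω = 0, x = xm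
    have hxma : xm ≤ a := by
      have h1 : 2 * (g₀ - g₁) < τ⁻¹ := by
        rw [inv_eq_one_div, lt_div_iff₀ hτ]; linarith
      rw [hxmdef, hadef]
      nlinarith [mul_pos (sub_pos.mpr h1) (by positivity : (0:ℝ) < τ⁻¹ + 2 * (g₀ - g₁))]
    have hR : Rcheck (2 * (g₀ - g₁) * τ) = 2 * (2 * (g₀ - g₁) * τ) / ((2 * (g₀ - g₁) * τ) ^ 2 + 1) := by
      rw [Rcheck, if_pos hc]
    have hV : (1/4) * (g₀ * g₁ * τ / (g₀ - g₁)) * Rcheck (2 * (g₀ - g₁) * τ)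
        = g₀ * g₁ * ((xm + a) ^ 2) ^ (-(1/2) : ℝ) := by
      rw [hR, rpow_sq_inv (by positivity)]
      rw [hxmdef, hadef]
      field_simp
      ring
    constructor
    · refine ⟨0, xm, ⟨le_refl _, ?_⟩, ?_⟩
      · rw [hxmdef]; nlinarith [mul_pos hg₀ hg₁]
      · rw [hV]; norm_num
    · rintro y ⟨ω, x, hx, rfl⟩
      rw [hV]
      have hmin := aux2 ha0 hxm0 (sq_nonneg ω) hx.1 hxma
      exact mul_le_mul_of_nonneg_left (rpow_anti (by positivity) hmin)
        (by positivity)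
  · -- ξ ≥ 1 : a ≤ xm, min is 4 a xm, attained at ω² = xm - a, x = xm
    have haxm : a ≤ xm := by
      rw [hxmdef, hadef]
      rw [inv_pow, inv_le_iff_one_le_mul₀ (by positivity)]
      nlinarith
    have hR : Rcheck (2 * (g₀ - g₁) * τ) = 1 := by
      rw [Rcheck, if_neg (not_lt.mpr hc)]
    have hsq : 4 * a * xm = (4 * (g₀ - g₁) * τ⁻¹) ^ 2 := by
      rw [hxmdef, hadef]; ring
    have hV : (1/4) * (g₀ * g₁ * τ / (g₀ - g₁)) * Rcheck (2 * (g₀ - g₁) * τ)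
        = g₀ * g₁ * (4 * a * xm) ^ (-(1/2) : ℝ) := by
      rw [hR, hsq, rpow_sq_inv (by positivity)]
      field_simp
    constructor
    · refine ⟨Real.sqrt (xm - a), xm, ⟨le_refl _, ?_⟩, ?_⟩
      · rw [hxmdef]; nlinarith [mul_pos hg₀ hg₁]
      · have hb : (xm - Real.sqrt (xm - a) ^ 2 + a) ^ 2 + 4 * Real.sqrt (xm - a) ^ 2 * a
            = 4 * a * xm := by
          rw [Real.sq_sqrt (sub_nonneg.mpr haxm)]; ring
        rw [hV, hb]
    · rintro y ⟨ω, x, hx, rfl⟩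
      rw [hV]
      have hmin := aux1 ha0 (sq_nonneg ω) hx.1 haxm
      exact mul_le_mul_of_nonneg_left (rpow_anti (by positivity) hmin)
        (by positivity)
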